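/- For 1/2 < α < 1 and c = α/(1−α), the weighted-mean complexity term satisfies: c·C^{S,α}(x,z) + c·C^{S,α}(y,z) − z − (c−1)·(i₁ + i₂) ≥ C^{S,α}(x,y) whenever x, y, z ≥ 0, 0 ≤ i₁ ≤ min(x,z), 0 ≤ i₂ ≤ min(y,z), where C^{S,α}(a,b) = α·min(a,b) + (1−α)·max(a,b). Consequently D^{S,α} satisfies the relaxed triangle inequality D^{S,α}(X,Y) ≤ (α/(1−α))·(D^{S,α}(X,Z) + D^{S,α}(Y,Z)). -/

import Mathlib

open Real

/-- Shannon entropy of a discrete random variable `X` on a finite probability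
space with weights `p`. -/
noncomputable def ent {Ω S : Type*} [Fintype Ω] [Fintype S] [DecidableEq S]
    (p : Ω → ℝ) (X : Ω → S) : ℝ :=
  ∑ s : S, Real.negMulLog (∑ ω ∈ Finset.univ.filter (fun ω => X ω = s), p ω)

/-- Conditional entropy `H(X|Y) = H(X,Y) - H(Y)`. -/
noncomputable def condEnt {Ω S T : Type*} [Fintype Ω] [Fintype S] [Fintype T]
    [DecidableEq S] [DecidableEq T] (p : Ω → ℝ) (X : Ω → S) (Y : Ω → T) : ℝ :=
  ent p (fun ω => (X ω, Y ω)) - ent p Y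

/-- Mutual information `I(X;Y) = H(X) + H(Y) - H(X,Y)`. -/
noncomputable def mutualInfo {Ω S T : Type*} [Fintype Ω] [Fintype S] [Fintype T]
    [DecidableEq S] [DecidableEq T] (p : Ω → ℝ) (X : Ω → S) (Y : Ω → T) : ℝ :=
  ent p X + ent p Y - ent p (fun ω => (X ω, Y ω))

/-- The complexity term `C^{S,α}(a,b) = α·min(a,b) + (1-α)·max(a,b)`. -/
noncomputable def Cs (α a b : ℝ) : ℝ := α * min a b + (1 - α) * max a b

/-- The divergence `D^{S,α}`. -/
noncomputable def DS {Ω S T : Type*} [Fintype Ω] [Fintype S] [Fintype T]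
    [DecidableEq S] [DecidableEq T] (α : ℝ) (p : Ω → ℝ) (X : Ω → S) (Y : Ω → T) : ℝ :=
  Cs α (ent p X) (ent p Y) - mutualInfo p X Y

/-! ### Auxiliary lemmas -/

/-- Gibbs' inequality. -/
lemma aux_gibbs {I : Type*} [Fintype I] (P Q : I → ℝ) (hP : ∀ i, 0 ≤ P i)
    (hQ : ∀ i, 0 ≤ Q i) (hPQ : ∀ i, 0 < P i → 0 < Q i)
    (hsum : ∑ i, Q i ≤ ∑ i, P i) :
    ∑ i, P i * Real.log (Q i) ≤ ∑ i, P i * Real.log (P i) := by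
  have key : ∀ i, P i * Real.log (Q i) ≤ P i * Real.log (P i) + (Q i - P i) := by
    intro i
    rcases (hP i).eq_or_lt with h | h
    · simp [← h]; exact hQ i
    · have hq := hPQ i h
      have hlog : Real.log (Q i / P i) ≤ Q i / P i - 1 :=
        Real.log_le_sub_one_of_pos (by positivity)
      rw [Real.log_div (ne_of_gt hq) (ne_of_gt h)] at hlog
      have h2 : P i * (Real.log (Q i) - Real.log (P i)) ≤ P i * (Q i / P i - 1) :=
        mul_le_mul_of_nonneg_left hlog h.le
      have h3 : P i * (Q i / P i - 1) = Q i - P i := by field_simp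
      nlinarith [h2, h3]
  calc ∑ i, P i * Real.log (Q i) ≤ ∑ i, (P i * Real.log (P i) + (Q i - P i)) :=
        Finset.sum_le_sum fun i _ => key i
    _ = ∑ i, P i * Real.log (P i) + (∑ i, Q i - ∑ i, P i) := by
        rw [Finset.sum_add_distrib, Finset.sum_sub_distrib]
    _ ≤ _ := by linarith

/-- `negMulLog` is subadditive on nonnegative reals. -/
lemma aux_negMulLog_sum_le {ι : Type*} (s : Finset ι) (g : ι → ℝ)
    (hg : ∀ i ∈ s, 0 ≤ g i) :
    Real.negMulLog (∑ i ∈ s, g i) ≤ ∑ i ∈ s, Real.negMulLog (g i) := by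
  have hrw : Real.negMulLog (∑ i ∈ s, g i)
      = ∑ i ∈ s, (-(g i) * Real.log (∑ j ∈ s, g j)) := by
    rw [Real.negMulLog, ← Finset.sum_mul, ← Finset.sum_neg_distrib]
  rw [hrw]
  apply Finset.sum_le_sum
  intro i hi
  rcases (hg i hi).eq_or_lt with h | h
  · simp [← h, Real.negMulLog]
  · have hT : g i ≤ ∑ j ∈ s, g j := Finset.single_le_sum hg hi
    have hl : Real.log (g i) ≤ Real.log (∑ j ∈ s, g j) := Real.log_le_log h hT
    rw [Real.negMulLog]
    nlinarith [hl]

/-- Pushforward weights of a composition. -/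
lemma aux_pf_comp {Ω A B : Type*} [Fintype Ω] [Fintype A] [DecidableEq A] [DecidableEq B]
    (p : Ω → ℝ) (W : Ω → A) (f : A → B) (b : B) :
    ∑ ω ∈ Finset.univ.filter (fun ω => f (W ω) = b), p ω
      = ∑ a ∈ Finset.univ.filter (fun a => f a = b),
          ∑ ω ∈ Finset.univ.filter (fun ω => W ω = a), p ω := by
  rw [← Finset.sum_fiberwise (Finset.univ.filter (fun ω => f (W ω) = b)) W p,
    Finset.sum_filter]
  apply Finset.sum_congr rfl
  intro a _
  rw [Finset.filter_filter]
  by_cases h : f a = b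
  · simp only [h, if_true]
    apply Finset.sum_congr _ (fun _ _ => rfl)
    ext ω
    simp only [Finset.mem_filter, Finset.mem_univ, true_and]
    constructor
    · rintro ⟨-, h2⟩; exact h2
    · intro h2; exact ⟨by rw [h2, h], h2⟩
  · simp only [h, if_false]
    apply Finset.sum_eq_zero
    intro ω hω
    simp only [Finset.mem_filter] at hω
    exact absurd (hω.2.2 ▸ hω.2.1) h

/-- Entropy decreases under post-composition (coarse-graining). -/
lemma aux_ent_comp_le {Ω A B : Type*} [Fintype Ω] [Fintype A] [Fintype B]
    [DecidableEq A] [DecidableEq B]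
    (p : Ω → ℝ) (hp0 : ∀ ω, 0 ≤ p ω) (W : Ω → A) (f : A → B) :
    ent p (fun ω => f (W ω)) ≤ ent p W := by
  unfold ent
  rw [← Finset.sum_fiberwise (Finset.univ : Finset A) f
    (fun a => Real.negMulLog (∑ ω ∈ Finset.univ.filter (fun ω => W ω = a), p ω))]
  apply Finset.sum_le_sum
  intro b _
  rw [aux_pf_comp p W f b]
  exact aux_negMulLog_sum_le _ _ (fun a _ => Finset.sum_nonneg fun ω _ => hp0 ω)

/-- Entropy is invariant under injective relabelling. -/
lemma aux_ent_comp_eq {Ω A B : Type*} [Fintype Ω] [Fintype A] [Fintype B]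
    [DecidableEq A] [DecidableEq B]
    (p : Ω → ℝ) (hp0 : ∀ ω, 0 ≤ p ω) (W : Ω → A) (f : A → B) (g : B → A)
    (hgf : ∀ a, g (f a) = a) :
    ent p (fun ω => f (W ω)) = ent p W := by
  refine le_antisymm (aux_ent_comp_le p hp0 W f) ?_
  have h := aux_ent_comp_le p hp0 (fun ω => f (W ω)) g
  simpa only [hgf] using h

lemma aux_ent_nonneg {Ω A : Type*} [Fintype Ω] [Fintype A] [DecidableEq A]
    (p : Ω → ℝ) (hp0 : ∀ ω, 0 ≤ p ω) (hp1 : ∑ ω, p ω = 1) (W : Ω → A) :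
    0 ≤ ent p W := by
  apply Finset.sum_nonneg
  intro a _
  apply Real.negMulLog_nonneg (Finset.sum_nonneg fun ω _ => hp0 ω)
  rw [← hp1]
  exact Finset.sum_le_sum_of_subset_of_nonneg (Finset.filter_subset _ _)
    (fun ω _ _ => hp0 ω)

lemma aux_ent_const {Ω B : Type*} [Fintype Ω] [Fintype B] [DecidableEq B]
    (p : Ω → ℝ) (hp1 : ∑ ω, p ω = 1) (c : B) :
    ent p (fun _ : Ω => c) = 0 := by
  unfold ent
  apply Finset.sum_eq_zero
  intro b _
  by_cases h : c = b
  · subst h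
    simp [Finset.filter_true_of_mem, hp1]
  · simp [h]

section core
variable {S T U : Type*} [Fintype S] [Fintype T] [Fintype U]

lemma aux_regroupA (P : S × T × U → ℝ) (f : S × U → ℝ) :
    ∑ v : S × T × U, P v * f (v.1, v.2.2)
      = ∑ b : S × U, (∑ t, P (b.1, t, b.2)) * f b := by
  simp only [Fintype.sum_prod_type]
  refine Finset.sum_congr rfl fun s _ => ?_
  rw [Finset.sum_comm]
  refine Finset.sum_congr rfl fun u _ => ?_
  rw [Finset.sum_mul]

lemma aux_regroupB (P : S × T × U → ℝ) (f : T × U → ℝ) :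
    ∑ v : S × T × U, P v * f (v.2.1, v.2.2)
      = ∑ b : T × U, (∑ s, P (s, b.1, b.2)) * f b := by
  simp only [Fintype.sum_prod_type]
  rw [Finset.sum_comm]
  refine Finset.sum_congr rfl fun t _ => ?_
  rw [Finset.sum_comm]
  refine Finset.sum_congr rfl fun u _ => ?_
  rw [Finset.sum_mul]

lemma aux_regroupC (P : S × T × U → ℝ) (f : U → ℝ) :
    ∑ v : S × T × U, P v * f v.2.2
      = ∑ u : U, (∑ s, ∑ t, P (s, t, u)) * f u := by
  simp only [Fintype.sum_prod_type]
  have h1 : ∀ s : S, ∑ t, ∑ u, P (s, t, u) * f u = ∑ u, (∑ t, P (s, t, u)) * f u := by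
    intro s
    rw [Finset.sum_comm]
    exact Finset.sum_congr rfl fun u _ => by rw [Finset.sum_mul]
  simp only [h1]
  rw [Finset.sum_comm]
  exact Finset.sum_congr rfl fun u _ => by rw [Finset.sum_mul]

/-- Submodularity of entropy on the level of joint weight functions. -/
lemma aux_core_ineq (P : S × T × U → ℝ) (hP : ∀ v, 0 ≤ P v) :
    ∑ v, Real.negMulLog (P v) + ∑ u, Real.negMulLog (∑ s, ∑ t, P (s, t, u))
      ≤ ∑ b : S × U, Real.negMulLog (∑ t, P (b.1, t, b.2))
        + ∑ b : T × U, Real.negMulLog (∑ s, P (s, b.1, b.2)) := by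
  set A : S × U → ℝ := fun b => ∑ t, P (b.1, t, b.2) with hA
  set B : T × U → ℝ := fun b => ∑ s, P (s, b.1, b.2) with hB
  set C : U → ℝ := fun u => ∑ s, ∑ t, P (s, t, u) with hC
  have hA0 : ∀ b, 0 ≤ A b := fun b => Finset.sum_nonneg fun _ _ => hP _
  have hB0 : ∀ b, 0 ≤ B b := fun b => Finset.sum_nonneg fun _ _ => hP _
  have hC0 : ∀ u, 0 ≤ C u := fun u => Finset.sum_nonneg fun _ _ =>
    Finset.sum_nonneg fun _ _ => hP _
  have hPA : ∀ v : S × T × U, P v ≤ A (v.1, v.2.2) := by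
    intro v
    have := Finset.single_le_sum (f := fun t => P (v.1, t, v.2.2))
      (fun t _ => hP _) (Finset.mem_univ v.2.1)
    simpa using this
  have hPB : ∀ v : S × T × U, P v ≤ B (v.2.1, v.2.2) := by
    intro v
    have := Finset.single_le_sum (f := fun s => P (s, v.2.1, v.2.2))
      (fun s _ => hP _) (Finset.mem_univ v.1)
    simpa using this
  have hAC : ∀ v : S × T × U, A (v.1, v.2.2) ≤ C v.2.2 := by
    intro v
    have := Finset.single_le_sum (f := fun s => ∑ t, P (s, t, v.2.2))
      (fun s _ => Finset.sum_nonneg fun _ _ => hP _) (Finset.mem_univ v.1)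
    simpa using this
  have hPC : ∀ v : S × T × U, P v ≤ C v.2.2 := fun v => (hPA v).trans (hAC v)
  set Q : S × T × U → ℝ := fun v => A (v.1, v.2.2) * B (v.2.1, v.2.2) / C v.2.2 with hQ
  have hQ0 : ∀ v, 0 ≤ Q v := fun v =>
    div_nonneg (mul_nonneg (hA0 _) (hB0 _)) (hC0 _)
  have hPposQ : ∀ v, 0 < P v → 0 < Q v := by
    intro v hv
    exact div_pos (mul_pos (lt_of_lt_of_le hv (hPA v)) (lt_of_lt_of_le hv (hPB v)))
      (lt_of_lt_of_le hv (hPC v))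
  have hACu : ∀ u, ∑ s, A (s, u) = C u := fun u => rfl
  have hBCu : ∀ u, ∑ t, B (t, u) = C u := fun u => Finset.sum_comm
  have hsumP : ∑ v, P v = ∑ u, C u := by
    simp only [hC]
    simp only [Fintype.sum_prod_type]
    rw [show (∑ s, ∑ t, ∑ u, P (s, t, u)) = ∑ s, ∑ u, ∑ t, P (s, t, u) from
      Finset.sum_congr rfl fun s _ => Finset.sum_comm, Finset.sum_comm]
  have hsumQ : ∑ v, Q v = ∑ u, C u := by
    have step1 : ∑ v : S × T × U, Q v
        = ∑ u, (∑ s, A (s, u)) * (∑ t, B (t, u)) / C u := by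
      simp only [hQ]
      simp only [Fintype.sum_prod_type]
      have h1 : ∀ s : S, ∑ t, ∑ u, A (s, u) * B (t, u) / C u
          = ∑ u, A (s, u) * (∑ t, B (t, u)) / C u := by
        intro s
        rw [Finset.sum_comm]
        refine Finset.sum_congr rfl fun u _ => ?_
        rw [← Finset.sum_div, ← Finset.mul_sum]
      simp only [h1]
      rw [Finset.sum_comm]
      refine Finset.sum_congr rfl fun u _ => ?_
      rw [← Finset.sum_div, ← Finset.sum_mul]
    rw [step1]
    refine Finset.sum_congr rfl fun u _ => ?_
    rw [hACu, hBCu]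
    rcases eq_or_ne (C u) 0 with h | h
    · simp [h]
    · rw [mul_div_assoc, div_self h, mul_one]
  have hgibbs := aux_gibbs P Q hP hQ0 hPposQ (by rw [hsumP, hsumQ])
  have hsplit : ∀ v, P v * Real.log (Q v)
      = P v * Real.log (A (v.1, v.2.2)) + P v * Real.log (B (v.2.1, v.2.2))
        - P v * Real.log (C v.2.2) := by
    intro v
    rcases (hP v).eq_or_lt with h | h
    · rw [← h]; ring
    · have ha := lt_of_lt_of_le h (hPA v)
      have hb := lt_of_lt_of_le h (hPB v)
      have hc := lt_of_lt_of_le h (hPC v)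
      simp only [hQ]
      rw [Real.log_div (by positivity) (ne_of_gt hc),
        Real.log_mul (ne_of_gt ha) (ne_of_gt hb)]
      ring
  have hPQsum : ∑ v, P v * Real.log (Q v)
      = ∑ b : S × U, A b * Real.log (A b) + ∑ b : T × U, B b * Real.log (B b)
        - ∑ u, C u * Real.log (C u) := by
    calc ∑ v, P v * Real.log (Q v)
        = ∑ v, (P v * Real.log (A (v.1, v.2.2)) + P v * Real.log (B (v.2.1, v.2.2))
            - P v * Real.log (C v.2.2)) := Finset.sum_congr rfl fun v _ => hsplit v
      _ = ∑ v, (P v * Real.log (A (v.1, v.2.2)))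
            + ∑ v, (P v * Real.log (B (v.2.1, v.2.2)))
            - ∑ v, (P v * Real.log (C v.2.2)) := by
          rw [Finset.sum_sub_distrib, Finset.sum_add_distrib]
      _ = _ := by
          rw [aux_regroupA P (fun b => Real.log (A b)),
            aux_regroupB P (fun b => Real.log (B b)),
            aux_regroupC P (fun u => Real.log (C u))]
  rw [hPQsum] at hgibbs
  simp only [Real.negMulLog, neg_mul, Finset.sum_neg_distrib]
  linarith [hgibbs]

end core

/-- Submodularity of entropy. -/
lemma aux_submod {Ω S T U : Type*} [Fintype Ω] [Fintype S] [Fintype T] [Fintype U]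
    [DecidableEq S] [DecidableEq T] [DecidableEq U]
    (p : Ω → ℝ) (hp0 : ∀ ω, 0 ≤ p ω) (X : Ω → S) (Y : Ω → T) (Z : Ω → U) :
    ent p (fun ω => (X ω, Y ω, Z ω)) + ent p Z
      ≤ ent p (fun ω => (X ω, Z ω)) + ent p (fun ω => (Y ω, Z ω)) := by
  set P : S × T × U → ℝ :=
    fun v => ∑ ω ∈ Finset.univ.filter (fun ω => (X ω, Y ω, Z ω) = v), p ω with hPd
  have hP0 : ∀ v, 0 ≤ P v := fun v => Finset.sum_nonneg fun ω _ => hp0 ω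
  have hAslice : ∀ b : S × U,
      (∑ ω ∈ Finset.univ.filter (fun ω => (X ω, Z ω) = b), p ω)
        = ∑ t, P (b.1, t, b.2) := by
    intro b
    rw [← Finset.sum_fiberwise (Finset.univ.filter (fun ω => (X ω, Z ω) = b)) Y p]
    refine Finset.sum_congr rfl fun t _ => ?_
    rw [Finset.filter_filter]
    refine Finset.sum_congr ?_ (fun _ _ => rfl)
    ext ω
    simp only [Finset.mem_filter, Finset.mem_univ, true_and, Prod.mk.injEq, Prod.ext_iff]
    tauto
  have hBslice : ∀ b : T × U,
      (∑ ω ∈ Finset.univ.filter (fun ω => (Y ω, Z ω) = b), p ω)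
        = ∑ s, P (s, b.1, b.2) := by
    intro b
    rw [← Finset.sum_fiberwise (Finset.univ.filter (fun ω => (Y ω, Z ω) = b)) X p]
    refine Finset.sum_congr rfl fun s _ => ?_
    rw [Finset.filter_filter]
    refine Finset.sum_congr ?_ (fun _ _ => rfl)
    ext ω
    simp only [Finset.mem_filter, Finset.mem_univ, true_and, Prod.mk.injEq, Prod.ext_iff]
    tauto
  have hCslice : ∀ u : U,
      (∑ ω ∈ Finset.univ.filter (fun ω => Z ω = u), p ω)
        = ∑ s, ∑ t, P (s, t, u) := by
    intro u
    rw [← Finset.sum_fiberwise (Finset.univ.filter (fun ω => Z ω = u))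
      (fun ω => (X ω, Y ω)) p]
    rw [Fintype.sum_prod_type]
    refine Finset.sum_congr rfl fun s _ => Finset.sum_congr rfl fun t _ => ?_
    rw [Finset.filter_filter]
    refine Finset.sum_congr ?_ (fun _ _ => rfl)
    ext ω
    simp only [Finset.mem_filter, Finset.mem_univ, true_and, Prod.mk.injEq, Prod.ext_iff]
    tauto
  have h := aux_core_ineq P hP0
  have e1 : ent p (fun ω => (X ω, Y ω, Z ω)) = ∑ v, Real.negMulLog (P v) := rfl
  have e2 : ent p Z = ∑ u, Real.negMulLog (∑ s, ∑ t, P (s, t, u)) :=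
    Finset.sum_congr rfl fun u _ => by rw [hCslice u]
  have e3 : ent p (fun ω => (X ω, Z ω))
      = ∑ b : S × U, Real.negMulLog (∑ t, P (b.1, t, b.2)) :=
    Finset.sum_congr rfl fun b _ => by rw [← hAslice b]
  have e4 : ent p (fun ω => (Y ω, Z ω))
      = ∑ b : T × U, Real.negMulLog (∑ s, P (s, b.1, b.2)) :=
    Finset.sum_congr rfl fun b _ => by rw [← hBslice b]
  linarith [h, e1, e2, e3, e4]

/-- Subadditivity of entropy. -/
lemma aux_subadd {Ω S U : Type*} [Fintype Ω] [Fintype S] [Fintype U]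
    [DecidableEq S] [DecidableEq U]
    (p : Ω → ℝ) (hp0 : ∀ ω, 0 ≤ p ω) (hp1 : ∑ ω, p ω = 1)
    (X : Ω → S) (Z : Ω → U) :
    ent p (fun ω => (X ω, Z ω)) ≤ ent p X + ent p Z := by
  have h := aux_submod p hp0 X Z (fun _ => ())
  have e0 : ent p (fun _ : Ω => ()) = 0 := aux_ent_const p hp1 _
  have e1 : ent p (fun ω => (X ω, Z ω, ())) = ent p (fun ω => (X ω, Z ω)) :=
    aux_ent_comp_eq p hp0 (fun ω => (X ω, Z ω))
      (fun a => (a.1, a.2, ())) (fun v => (v.1, v.2.1)) (fun a => rfl)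
  have e2 : ent p (fun ω => (X ω, ())) = ent p X :=
    aux_ent_comp_eq p hp0 X (fun s => (s, ())) Prod.fst (fun a => rfl)
  have e3 : ent p (fun ω => (Z ω, ())) = ent p Z :=
    aux_ent_comp_eq p hp0 Z (fun s => (s, ())) Prod.fst (fun a => rfl)
  rw [e0, e1, e2, e3] at h
  linarith

theorem DS_relaxed_triangle {Ω S T U : Type*} [Fintype Ω] [Fintype S] [Fintype T]
    [Fintype U] [DecidableEq S] [DecidableEq T] [DecidableEq U]
    (p : Ω → ℝ) (hp0 : ∀ ω, 0 ≤ p ω) (hp1 : ∑ ω, p ω = 1)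
    (α : ℝ) (hα : 1 / 2 < α) (hα1 : α < 1)
    (X : Ω → S) (Y : Ω → T) (Z : Ω → U) :
    (∀ x y z i₁ i₂ : ℝ, 0 ≤ x → 0 ≤ y → 0 ≤ z →
        0 ≤ i₁ → i₁ ≤ min x z → 0 ≤ i₂ → i₂ ≤ min y z →
        (α / (1 - α)) * Cs α x z + (α / (1 - α)) * Cs α y z - z -
          ((α / (1 - α)) - 1) * (i₁ + i₂) ≥ Cs α x y) ∧
      DS α p X Y ≤ (α / (1 - α)) * (DS α p X Z + DS α p Y Z) := by
  have h1α : 0 < 1 - α := by linarith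
  have h2α : 0 < 2 * α - 1 := by linarith
  have part1 : ∀ x y z i₁ i₂ : ℝ, 0 ≤ x → 0 ≤ y → 0 ≤ z →
      0 ≤ i₁ → i₁ ≤ min x z → 0 ≤ i₂ → i₂ ≤ min y z →
      (α / (1 - α)) * Cs α x z + (α / (1 - α)) * Cs α y z - z -
        ((α / (1 - α)) - 1) * (i₁ + i₂) ≥ Cs α x y := by
    intro x y z i₁ i₂ hx hy hz hi10 hi1 hi20 hi2
    have csid : ∀ a b : ℝ, Cs α a b = (1 - α) * (a + b) + (2 * α - 1) * min a b := by
      intro a b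
      rw [Cs, show max a b = a + b - min a b from by linarith [min_add_max a b]]
      ring
    have key : (1 - α) * ((α / (1 - α)) * Cs α x z + (α / (1 - α)) * Cs α y z - z -
          ((α / (1 - α)) - 1) * (i₁ + i₂))
        = α * Cs α x z + α * Cs α y z - (1 - α) * z - (2 * α - 1) * (i₁ + i₂) := by
      have hne : (1 - α) ≠ 0 := ne_of_gt h1α
      field_simp
      ring
    have hmm : min x y + min x z + min y z ≤ x + y + z := by
      rcases le_total x z with h | h
      · have h1 := min_le_right x y
        have h2 := min_le_right y z
        rw [min_eq_left h]
        linarith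
      · have h1 := min_le_left x y
        have h2 := min_le_left y z
        rw [min_eq_right h]
        linarith
    have f1 : 0 ≤ (2 * α - 1) * (min x z - i₁) := mul_nonneg h2α.le (by linarith)
    have f2 : 0 ≤ (2 * α - 1) * (min y z - i₂) := mul_nonneg h2α.le (by linarith)
    have f3 : 0 ≤ ((1 - α) * (2 * α - 1)) * (x + y + z - (min x y + min x z + min y z)) :=
      mul_nonneg (mul_nonneg h1α.le h2α.le) (by linarith)
    have main : (1 - α) * Cs α x y ≤ (1 - α) * ((α / (1 - α)) * Cs α x z +
        (α / (1 - α)) * Cs α y z - z - ((α / (1 - α)) - 1) * (i₁ + i₂)) := by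
      rw [key]
      simp only [csid]
      nlinarith [f1, f2, f3]
    rw [ge_iff_le]
    exact le_of_mul_le_mul_left main h1α
  refine ⟨part1, ?_⟩
  -- entropy facts
  have hx : 0 ≤ ent p X := aux_ent_nonneg p hp0 hp1 X
  have hy : 0 ≤ ent p Y := aux_ent_nonneg p hp0 hp1 Y
  have hz : 0 ≤ ent p Z := aux_ent_nonneg p hp0 hp1 Z
  have hsubXZ : ent p (fun ω => (X ω, Z ω)) ≤ ent p X + ent p Z :=
    aux_subadd p hp0 hp1 X Z
  have hsubYZ : ent p (fun ω => (Y ω, Z ω)) ≤ ent p Y + ent p Z :=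
    aux_subadd p hp0 hp1 Y Z
  have hmXZ1 : ent p X ≤ ent p (fun ω => (X ω, Z ω)) :=
    aux_ent_comp_le p hp0 (fun ω => (X ω, Z ω)) Prod.fst
  have hmXZ2 : ent p Z ≤ ent p (fun ω => (X ω, Z ω)) :=
    aux_ent_comp_le p hp0 (fun ω => (X ω, Z ω)) Prod.snd
  have hmYZ1 : ent p Y ≤ ent p (fun ω => (Y ω, Z ω)) :=
    aux_ent_comp_le p hp0 (fun ω => (Y ω, Z ω)) Prod.fst
  have hmYZ2 : ent p Z ≤ ent p (fun ω => (Y ω, Z ω)) :=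
    aux_ent_comp_le p hp0 (fun ω => (Y ω, Z ω)) Prod.snd
  have hmXY : ent p (fun ω => (X ω, Y ω)) ≤ ent p (fun ω => (X ω, Y ω, Z ω)) :=
    aux_ent_comp_le p hp0 (fun ω => (X ω, Y ω, Z ω)) (fun v => (v.1, v.2.1))
  have hsub := aux_submod p hp0 X Y Z
  have hi1l : 0 ≤ mutualInfo p X Z := by unfold mutualInfo; linarith
  have hi2l : 0 ≤ mutualInfo p Y Z := by unfold mutualInfo; linarith
  have hi1u : mutualInfo p X Z ≤ min (ent p X) (ent p Z) := by
    apply le_min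
    all_goals unfold mutualInfo; linarith
  have hi2u : mutualInfo p Y Z ≤ min (ent p Y) (ent p Z) := by
    apply le_min
    all_goals unfold mutualInfo; linarith
  have hIXY : mutualInfo p X Z + mutualInfo p Y Z - ent p Z ≤ mutualInfo p X Y := by
    unfold mutualInfo
    linarith
  have key := part1 (ent p X) (ent p Y) (ent p Z) (mutualInfo p X Z)
    (mutualInfo p Y Z) hx hy hz hi1l hi1u hi2l hi2u
  rw [ge_iff_le] at key
  simp only [DS]
  linarith
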